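/- arXiv:2310.15750 — 3 statements merged into one kernel-verified Lean document; each statement's English description precedes it below -/
import Mathlib

section
/- Let f : ℝ → ℝ be continuous on the compact interval [0, T], with f_max = sup of f on [0,T] and f_min = inf of f on [0,T]. Suppose a threshold C satisfies 0 < C < (f_max - f_min)/L for a positive integer L. Then the interval [f_min, f_max] contains at least L+1 values of the form f_min + k·C (k = 0, 1, ..., L), and for each consecutive pair of such levels, by the intermediate value theorem f attains every value between them; in particular there exist at least L distinct points t_1 < t_2 < ... < t_L in [0,T] such that |f(t_i) - f(t_{i-1})| ≥ C for consecutive points, i.e., one can find L points where f successively changes by at least C. -/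
lemma aux_chain (C : ℝ) (hC0 : 0 < C) :
    ∀ (n : ℕ) (f : ℝ → ℝ) (a b : ℝ), a ≤ b → ContinuousOn f (Set.Icc a b) →
      (n : ℝ) * C ≤ f b - f a →
      ∃ t : Fin (n + 1) → ℝ, StrictMono t ∧ (∀ i, t i ∈ Set.Icc a b) ∧
        t (Fin.last n) = b ∧ ∀ i : Fin n, C ≤ f (t i.succ) - f (t i.castSucc) := by
  intro n
  induction n with
  | zero =>
    intro f a b hab hf _
    exact ⟨fun _ => b, fun i j hij => absurd (Fin.lt_def.mp hij)
        (by have := i.isLt; have := j.isLt; omega),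
      fun _ => ⟨hab, le_rfl⟩, rfl, fun i => i.elim0⟩
  | succ n ih =>
    intro f a b hab hf hdiff
    have hCle : f a ≤ f b - C := by
      have : C ≤ ((n : ℝ) + 1) * C := by nlinarith [Nat.cast_nonneg (α := ℝ) n]
      push_cast at hdiff; linarith
    have hmem : f b - C ∈ Set.Icc (f a) (f b) := ⟨hCle, by linarith⟩
    obtain ⟨s, hs, hfs⟩ := intermediate_value_Icc hab hf hmem
    have hsb : s < b := lt_of_le_of_ne hs.2 (by intro h; rw [h] at hfs; linarith)
    have hdiff' : (n : ℝ) * C ≤ f s - f a := by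
      rw [hfs]; push_cast at hdiff; linarith
    obtain ⟨t', ht'mono, ht'mem, ht'last, ht'step⟩ :=
      ih f a s hs.1 (hf.mono (Set.Icc_subset_Icc_right hs.2)) hdiff'
    refine ⟨Fin.snoc t' b, ?_, ?_, ?_, ?_⟩
    · intro i j hij
      induction j using Fin.lastCases with
      | last =>
        have hi : i ≠ Fin.last _ := Fin.ne_last_of_lt hij
        obtain ⟨i', rfl⟩ := Fin.exists_castSucc_eq.mpr hi
        rw [Fin.snoc_castSucc, Fin.snoc_last]
        exact lt_of_le_of_lt (ht'mem i').2 hsb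
      | cast j' =>
        have hi : i ≠ Fin.last _ :=
          Fin.ne_last_of_lt (hij.trans (Fin.castSucc_lt_last j'))
        obtain ⟨i', rfl⟩ := Fin.exists_castSucc_eq.mpr hi
        rw [Fin.snoc_castSucc, Fin.snoc_castSucc]
        exact ht'mono (Fin.castSucc_lt_castSucc_iff.mp hij)
    · intro i
      induction i using Fin.lastCases with
      | last => rw [Fin.snoc_last]; exact ⟨hab, le_rfl⟩
      | cast i' =>
        rw [Fin.snoc_castSucc]
        exact ⟨(ht'mem i').1, (ht'mem i').2.trans hs.2⟩
    · rw [Fin.snoc_last]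
    · intro i
      induction i using Fin.lastCases with
      | last =>
        rw [Fin.succ_last, Fin.snoc_last, Fin.snoc_castSucc, ht'last, hfs]
        linarith
      | cast i' =>
        rw [Fin.succ_castSucc, Fin.snoc_castSucc, Fin.snoc_castSucc]
        exact ht'step i'

theorem neuromorphic_min_measurements
    (T : ℝ) (hT : 0 < T) (f : ℝ → ℝ)
    (hf : ContinuousOn f (Set.Icc 0 T))
    (L : ℕ) (hL : 1 ≤ L) (C : ℝ)
    (hC0 : 0 < C)
    (hC : C < (sSup (f '' Set.Icc 0 T) - sInf (f '' Set.Icc 0 T)) / L) :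
    ∃ t : Fin L → ℝ, StrictMono t ∧ (∀ i, t i ∈ Set.Icc 0 T) ∧
      ∀ (i : ℕ) (h : i + 1 < L),
        C ≤ |f (t ⟨i + 1, h⟩) - f (t ⟨i, Nat.lt_of_succ_lt h⟩)| := by
  obtain ⟨n, rfl⟩ : ∃ n, L = n + 1 := ⟨L - 1, (Nat.succ_pred_eq_of_pos hL).symm⟩
  have hcomp : IsCompact (Set.Icc (0:ℝ) T) := isCompact_Icc
  have hne : (Set.Icc (0:ℝ) T).Nonempty := Set.nonempty_Icc.mpr hT.le
  obtain ⟨p, hp, hfp⟩ := hcomp.exists_sSup_image_eq hne hf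
  obtain ⟨q, hq, hfq⟩ := hcomp.exists_sInf_image_eq hne hf
  have hLpos : (0:ℝ) < (n:ℝ) + 1 := by positivity
  have hgap : ((n:ℝ) + 1) * C < f p - f q := by
    rw [hfp, hfq] at hC
    have h1 : C < (f p - f q) / ((n:ℝ) + 1) := by push_cast at hC; exact hC
    have h2 := (lt_div_iff₀ hLpos).mp h1
    nlinarith
  have hngap : (n : ℝ) * C ≤ f p - f q := by nlinarith [Nat.cast_nonneg (α := ℝ) n]
  rcases le_total q p with hqp | hpq
  · obtain ⟨t, hmono, hmem, _, hstep⟩ :=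
      aux_chain C hC0 n f q p hqp (hf.mono (Set.Icc_subset_Icc hq.1 hp.2)) hngap
    refine ⟨t, hmono, fun i => Set.Icc_subset_Icc hq.1 hp.2 (hmem i), fun i h => ?_⟩
    have := hstep ⟨i, Nat.lt_of_succ_lt_succ h⟩
    have he1 : (⟨i, Nat.lt_of_succ_lt_succ h⟩ : Fin n).succ = ⟨i + 1, h⟩ := rfl
    have he2 : (⟨i, Nat.lt_of_succ_lt_succ h⟩ : Fin n).castSucc
        = ⟨i, Nat.lt_of_succ_lt h⟩ := rfl
    rw [he1, he2] at this
    exact this.trans (le_abs_self _)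
  · have hngap' : (n : ℝ) * C ≤ (fun x => -f x) q - (fun x => -f x) p := by
      show (n : ℝ) * C ≤ -f q - -f p; linarith
    obtain ⟨t, hmono, hmem, _, hstep⟩ :=
      aux_chain C hC0 n (fun x => -f x) p q hpq
        ((hf.mono (Set.Icc_subset_Icc hp.1 hq.2)).neg) hngap'
    refine ⟨t, hmono, fun i => Set.Icc_subset_Icc hp.1 hq.2 (hmem i), fun i h => ?_⟩
    have := hstep ⟨i, Nat.lt_of_succ_lt_succ h⟩
    have he1 : (⟨i, Nat.lt_of_succ_lt_succ h⟩ : Fin n).succ = ⟨i + 1, h⟩ := rfl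
    have he2 : (⟨i, Nat.lt_of_succ_lt_succ h⟩ : Fin n).castSucc
        = ⟨i, Nat.lt_of_succ_lt h⟩ := rfl
    rw [he1, he2] at this
    have this' : C ≤ -f (t ⟨i + 1, h⟩) - -f (t ⟨i, Nat.lt_of_succ_lt h⟩) := this
    calc C ≤ -(f (t ⟨i+1, h⟩) - f (t ⟨i, Nat.lt_of_succ_lt h⟩)) := by linarith
      _ ≤ |f (t ⟨i+1, h⟩) - f (t ⟨i, Nat.lt_of_succ_lt h⟩)| := neg_le_abs _
end

section
/- Let T > 0, K ≥ 1, and consider two parameter sets (a_k, τ_k)_{k=0}^{K-1} and (a'_k, τ'_k)_{k=0}^{K-1} with all amplitudes nonzero, with τ's distinct in [0,T) and τ''s distinct in [0,T). If (1/T) ∑_{k} a_k e^{-j(2π/T) l τ_k} = (1/T) ∑_{k} a'_k e^{-j(2π/T) l τ'_k} for all l ∈ {-K, ..., K} (i.e., 2K+1 consecutive Fourier coefficients agree), then the parameter sets coincide up to permutation: {(a_k, τ_k)} = {(a'_k, τ'_k)}. -/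
open Finset Polynomial

/-- Vandermonde-style vanishing lemma via Lagrange basis. -/
lemma aux_sum_pow_eq_zero {S : Finset ℂ} {c : ℂ → ℂ} {n : ℕ} (hcard : S.card ≤ n + 1)
    (h : ∀ l ≤ n, ∑ x ∈ S, c x * x ^ l = 0) : ∀ x ∈ S, c x = 0 := by
  intro x0 hx0
  have hinj : Set.InjOn (id : ℂ → ℂ) S := fun a _ b _ hab => hab
  set p := Lagrange.basis S id x0 with hp
  have hdeg : p.natDegree < n + 1 := by
    rw [hp, Lagrange.natDegree_basis hinj hx0]
    omega
  have heval : ∀ x : ℂ, p.eval x = ∑ j ∈ Finset.range (n + 1), p.coeff j * x ^ j := by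
    intro x
    rw [Polynomial.eval_eq_sum_range' hdeg]
  have hsum : ∑ x ∈ S, c x * p.eval x = c x0 := by
    rw [Finset.sum_eq_single x0]
    · have : p.eval (id x0) = 1 := Lagrange.eval_basis_self hinj hx0
      simp only [id] at this
      rw [this, mul_one]
    · intro b hb hbx
      have : p.eval (id b) = 0 := Lagrange.eval_basis_of_ne (fun hh => hbx hh.symm) hb
      simp only [id] at this
      rw [this, mul_zero]
    · intro hx; exact absurd hx0 hx
  have hzero : ∑ x ∈ S, c x * p.eval x = 0 := by
    calc ∑ x ∈ S, c x * p.eval x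
        = ∑ x ∈ S, ∑ j ∈ Finset.range (n + 1), c x * (p.coeff j * x ^ j) := by
          refine Finset.sum_congr rfl fun x _ => ?_
          rw [heval, Finset.mul_sum]
      _ = ∑ j ∈ Finset.range (n + 1), p.coeff j * ∑ x ∈ S, c x * x ^ j := by
          rw [Finset.sum_comm]
          refine Finset.sum_congr rfl fun j _ => ?_
          rw [Finset.mul_sum]
          refine Finset.sum_congr rfl fun x _ => ?_
          ring
      _ = 0 := by
          refine Finset.sum_eq_zero fun j hj => ?_
          rw [h j (by simpa using Nat.lt_succ_iff.mp (Finset.mem_range.mp hj)), mul_zero]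
  rw [hzero] at hsum
  exact hsum.symm

theorem fri_identifiability_from_2Kplus1_fourier_coefficients
    (T : ℝ) (hT : 0 < T) (K : ℕ) (hK : 1 ≤ K)
    (a a' : Fin K → ℂ) (ha : ∀ k, a k ≠ 0) (ha' : ∀ k, a' k ≠ 0)
    (τ τ' : Fin K → ℝ)
    (hτ : Function.Injective τ) (hτ' : Function.Injective τ')
    (hmem : ∀ k, τ k ∈ Set.Ico 0 T) (hmem' : ∀ k, τ' k ∈ Set.Ico 0 T)
    (hagree : ∀ l ∈ Finset.Icc (-(K : ℤ)) (K : ℤ),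
      (1 / (T : ℂ)) * ∑ k : Fin K,
        a k * Complex.exp (-(Complex.I * (2 * Real.pi / T) * (l : ℂ) * (τ k)))
      = (1 / (T : ℂ)) * ∑ k : Fin K,
        a' k * Complex.exp (-(Complex.I * (2 * Real.pi / T) * (l : ℂ) * (τ' k)))) :
    ∃ σ : Equiv.Perm (Fin K), ∀ k, a' k = a (σ k) ∧ τ' k = τ (σ k) := by
  classical
  set θ : ℝ := 2 * Real.pi / T with hθ
  have hθpos : 0 < θ := by positivity
  set ζ : ℝ → ℂ := fun t => Complex.exp (-(Complex.I * θ * t)) with hζ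
  have hζne : ∀ t, ζ t ≠ 0 := fun t => Complex.exp_ne_zero _
  -- ζ injective on [0, T)
  have hζinj : ∀ {s t : ℝ}, s ∈ Set.Ico (0:ℝ) T → t ∈ Set.Ico (0:ℝ) T → ζ s = ζ t → s = t := by
    intro s t hs ht hst
    rw [hζ] at hst
    simp only at hst
    rw [Complex.exp_eq_exp_iff_exists_int] at hst
    obtain ⟨n, hn⟩ := hst
    have him := congrArg Complex.im hn
    simp [Complex.add_im, Complex.mul_im, Complex.mul_re, Complex.I_im, Complex.I_re,
      Complex.ofReal_im, Complex.ofReal_re] at him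
    -- him : -(θ * s) = -(θ * t) + n * (2 * π)
    have hpi := Real.pi_pos
    obtain ⟨hs0, hsT⟩ := hs
    obtain ⟨ht0, htT⟩ := ht
    have hn0 : (n : ℝ) * T = t - s := by
      have hh : θ * (t - s) = n * (2 * Real.pi) := by linarith
      rw [hθ] at hh
      field_simp at hh
      nlinarith [hh]
    have habs : |(n : ℝ)| * T < T := by
      have h0 : |t - s| < T := abs_lt.mpr ⟨by linarith, by linarith⟩
      calc |(n : ℝ)| * T = |(n : ℝ) * T| := by rw [abs_mul, abs_of_pos hT]
        _ = |t - s| := by rw [hn0]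
        _ < T := h0
    have h1 : |(n : ℝ)| < 1 := by
      by_contra hcon
      push_neg at hcon
      nlinarith
    rw [abs_lt] at h1
    have h2 : (-1 : ℤ) < n := by exact_mod_cast h1.1
    have h3 : (n : ℤ) < 1 := by exact_mod_cast h1.2
    have hn00 : n = 0 := by omega
    rw [hn00] at hn0
    simp at hn0
    linarith
  -- injectivity of k ↦ ζ (τ k)
  have hzt : Function.Injective (fun k => ζ (τ k)) := fun i j h => hτ (hζinj (hmem i) (hmem j) h)
  have hzt' : Function.Injective (fun k => ζ (τ' k)) := fun i j h => hτ' (hζinj (hmem' i) (hmem' j) h)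
  -- rewrite exp terms as zpow of ζ
  have hpow : ∀ (l : ℤ) (t : ℝ),
      Complex.exp (-(Complex.I * (2 * Real.pi / T) * (l : ℂ) * (t : ℂ))) = ζ t ^ l := by
    intro l t
    have h1 : ζ t ^ l = Complex.exp ((l : ℂ) * (-(Complex.I * θ * t))) := by
      rw [hζ]
      exact (Complex.exp_int_mul _ l).symm
    rw [h1]
    congr 1
    rw [hθ]
    push_cast
    ring
  have hTne : (1 / (T : ℂ)) ≠ 0 := by
    simp only [ne_eq, one_div, inv_eq_zero, Complex.ofReal_eq_zero]
    exact ne_of_gt hT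
  have hA : ∀ m ∈ Finset.Icc (-(K : ℤ)) (K : ℤ),
      ∑ k : Fin K, a k * ζ (τ k) ^ m = ∑ k : Fin K, a' k * ζ (τ' k) ^ m := by
    intro m hm
    have h0 := mul_left_cancel₀ hTne (hagree m hm)
    simp_rw [hpow] at h0
    exact h0
  -- node set
  set S : Finset ℂ := (Finset.univ.image fun k => ζ (τ k)) ∪ (Finset.univ.image fun k => ζ (τ' k))
    with hS
  have hcardS : S.card ≤ 2 * K + 1 := by
    calc S.card ≤ (Finset.univ.image fun k : Fin K => ζ (τ k)).card
        + (Finset.univ.image fun k : Fin K => ζ (τ' k)).card := Finset.card_union_le _ _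
      _ ≤ K + K := by
          have h1 := Finset.card_image_le (s := (Finset.univ : Finset (Fin K))) (f := fun k => ζ (τ k))
          have h2 := Finset.card_image_le (s := (Finset.univ : Finset (Fin K))) (f := fun k => ζ (τ' k))
          simp only [Finset.card_univ, Fintype.card_fin] at h1 h2
          omega
      _ ≤ 2 * K + 1 := by omega
  have hSne : ∀ x ∈ S, x ≠ 0 := by
    intro x hx
    rw [hS, Finset.mem_union, Finset.mem_image, Finset.mem_image] at hx
    rcases hx with ⟨k, _, hk⟩ | ⟨k, _, hk⟩ <;> rw [← hk] <;> exact hζne _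
  -- fiber sums
  set g : ℂ → ℂ := fun z =>
      (∑ k ∈ Finset.univ.filter fun k => ζ (τ k) = z, a k)
        - ∑ k ∈ Finset.univ.filter fun k => ζ (τ' k) = z, a' k with hg
  set c : ℂ → ℂ := fun z => g z * (z ^ K)⁻¹ with hc
  -- fiberwise summation
  have hfib : ∀ (f : Fin K → ℂ) (w : Fin K → ℝ), (∀ k, ζ (w k) ∈ S) → ∀ h : ℂ → ℂ,
      ∑ x ∈ S, (∑ k ∈ Finset.univ.filter fun k => ζ (w k) = x, f k) * h x
        = ∑ k : Fin K, f k * h (ζ (w k)) := by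
    intro f w hw h
    rw [← Finset.sum_fiberwise_of_maps_to (fun k _ => hw k) (fun k => f k * h (ζ (w k)))]
    refine Finset.sum_congr rfl fun x _ => ?_
    rw [Finset.sum_mul]
    refine Finset.sum_congr rfl fun k hk => ?_
    rw [(Finset.mem_filter.mp hk).2]
  have hwS : ∀ k, ζ (τ k) ∈ S := fun k => Finset.mem_union_left _ (Finset.mem_image_of_mem _ (Finset.mem_univ k))
  have hwS' : ∀ k, ζ (τ' k) ∈ S := fun k => Finset.mem_union_right _ (Finset.mem_image_of_mem _ (Finset.mem_univ k))
  -- the vanishing equations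
  have hvan : ∀ l ≤ 2 * K, ∑ x ∈ S, c x * x ^ l = 0 := by
    intro l hl
    have hstep : ∀ x ∈ S, c x * x ^ l = g x * x ^ ((l : ℤ) - K) := by
      intro x hx
      have hx0 := hSne x hx
      rw [hc]
      simp only
      rw [zpow_sub₀ hx0, zpow_natCast, zpow_natCast]
      field_simp
    rw [Finset.sum_congr rfl hstep]
    have hsplit : ∀ x ∈ S, g x * x ^ ((l : ℤ) - K)
        = (∑ k ∈ Finset.univ.filter fun k => ζ (τ k) = x, a k) * x ^ ((l : ℤ) - K)
          - (∑ k ∈ Finset.univ.filter fun k => ζ (τ' k) = x, a' k) * x ^ ((l : ℤ) - K) := by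
      intro x _
      rw [hg]
      ring
    rw [Finset.sum_congr rfl hsplit, Finset.sum_sub_distrib,
      hfib a τ hwS (fun x => x ^ ((l : ℤ) - K)), hfib a' τ' hwS' (fun x => x ^ ((l : ℤ) - K))]
    rw [hA ((l : ℤ) - K) (by rw [Finset.mem_Icc]; omega)]
    ring
  -- coefficients vanish
  have hg0 : ∀ x ∈ S, g x = 0 := by
    intro x hx
    have := aux_sum_pow_eq_zero (n := 2 * K) (by omega) hvan x hx
    rw [hc] at this
    simp only at this
    rcases mul_eq_zero.mp this with h | h
    · exact h
    · exact absurd (inv_eq_zero.mp h) (pow_ne_zero _ (hSne x hx))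
  -- extract the matching
  have H : ∀ j : Fin K, ∃ k : Fin K, a k = a' j ∧ τ k = τ' j := by
    intro j
    have h0 := hg0 (ζ (τ' j)) (hwS' j)
    rw [hg] at h0
    simp only at h0
    have hFj : (Finset.univ.filter fun k => ζ (τ' k) = ζ (τ' j)) = {j} := by
      ext k
      simp only [Finset.mem_filter, Finset.mem_univ, true_and, Finset.mem_singleton]
      exact ⟨fun h => hzt' h, fun h => by rw [h]⟩
    rw [hFj, Finset.sum_singleton, sub_eq_zero] at h0
    set F := Finset.univ.filter fun k => ζ (τ k) = ζ (τ' j) with hF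
    have hFne : F.Nonempty := by
      by_contra hcon
      rw [Finset.not_nonempty_iff_eq_empty] at hcon
      rw [hcon, Finset.sum_empty] at h0
      exact ha' j h0.symm
    have hFcard : F.card ≤ 1 := by
      rw [Finset.card_le_one]
      intro i hi k hk
      rw [hF, Finset.mem_filter] at hi hk
      exact hzt (hi.2.trans hk.2.symm)
    obtain ⟨k, hkF⟩ := Finset.card_eq_one.mp (le_antisymm hFcard hFne.card_pos)
    refine ⟨k, ?_, ?_⟩
    · rw [hkF, Finset.sum_singleton] at h0
      exact h0
    · have hk : k ∈ F := hkF ▸ Finset.mem_singleton_self k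
      rw [hF, Finset.mem_filter] at hk
      exact hζinj (hmem k) (hmem' j) hk.2
  choose σ0 hσa hστ using H
  have hσinj : Function.Injective σ0 := by
    intro i j hij
    apply hτ'
    rw [← hστ i, ← hστ j, hij]
  have hσbij : Function.Bijective σ0 := Finite.injective_iff_bijective.mp hσinj
  exact ⟨Equiv.ofBijective σ0 hσbij, fun k => ⟨(hσa k).symm, (hστ k).symm⟩⟩
end

section
/- Let Q ≥ 1, K ≥ 1, and let ϑ_0, ..., ϑ_{K-1} be distinct unit-modulus complex numbers. For each channel i ∈ {1,...,Q}, let x̂^{(i)}_l = ∑_{k=0}^{K-1} c^{(i)}_k ϑ_k^l with coefficients c^{(i)}_k ∈ ℂ, and suppose that for every k there exists some channel i with c^{(i)}_k ≠ 0. Let Γ_K(x̂^{(i)}) be the (K+1)×(K+1) Toeplitz matrix of channel i and let Γ be the Q(K+1) × (K+1) vertical stack of these matrices. Then the nullspace of Γ is exactly one-dimensional, spanned by the common annihilating filter h with H(z) = h_0 ∏_{k=0}^{K-1} (1 − ϑ_k z^{-1}). -/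
open Polynomial

noncomputable def bannPolyOf (K : ℕ) (v : Fin (K+1) → ℂ) : Polynomial ℂ :=
  ∑ s : Fin (K+1), C (v s) * X ^ (K - (s : ℕ))

lemma bannPolyOf_coeff {K : ℕ} (v : Fin (K+1) → ℂ) (t : Fin (K+1)) :
    (bannPolyOf K v).coeff (K - (t : ℕ)) = v t := by
  rw [bannPolyOf, finset_sum_coeff, Finset.sum_eq_single t]
  · simp
  · intro s _ hst
    rw [coeff_C_mul, coeff_X_pow, if_neg, mul_zero]
    have hs := s.is_le
    have ht := t.is_le
    intro hEq
    exact hst (Fin.ext (by omega))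
  · simp

lemma bannPolyOf_natDegree_le {K : ℕ} (v : Fin (K+1) → ℂ) :
    (bannPolyOf K v).natDegree ≤ K := by
  apply natDegree_sum_le_of_forall_le
  intro s _
  exact (natDegree_C_mul_le _ _).trans (by simp [Nat.sub_le])

lemma bannPolyOf_injective {K : ℕ} : Function.Injective (bannPolyOf K) := by
  intro v w hvw
  funext t
  rw [← bannPolyOf_coeff v t, ← bannPolyOf_coeff w t, hvw]

lemma bannPolyOf_smul {K : ℕ} (a : ℂ) (v : Fin (K+1) → ℂ) :
    bannPolyOf K (a • v) = C a * bannPolyOf K v := by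
  simp [bannPolyOf, Finset.mul_sum, C_mul, mul_assoc]

lemma bannPolyOf_eval {K : ℕ} (v : Fin (K+1) → ℂ) (x : ℂ) :
    (bannPolyOf K v).eval x = ∑ s : Fin (K+1), v s * x ^ (K - (s : ℕ)) := by
  simp [bannPolyOf, eval_finset_sum]

theorem block_annihilation_nullspace_one_dimensional
    (Q : ℕ) (hQ : 1 ≤ Q) (K : ℕ) (hK : 1 ≤ K)
    (ϑ : Fin K → ℂ) (hinj : Function.Injective ϑ) (habs : ∀ k, ‖ϑ k‖ = 1)
    (c : Fin Q → Fin K → ℂ) (hc : ∀ k, ∃ i, c i k ≠ 0)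
    (h : Fin (K + 1) → ℂ)
    (hh : ∀ r : Fin (K + 1),
      h r = (∏ k : Fin K, (Polynomial.X - Polynomial.C (ϑ k))).coeff (K - (r : ℕ))) :
    LinearMap.ker (Matrix.mulVecLin (Matrix.of
        fun (p : Fin Q × Fin (K + 1)) (s : Fin (K + 1)) =>
          ∑ k : Fin K, c p.1 k * ϑ k ^ (((p.2 : ℕ) : ℤ) - ((s : ℕ) : ℤ))))
      = Submodule.span ℂ {h} := by
  have hϑ0 : ∀ k, ϑ k ≠ 0 := by
    intro k h0
    have := habs k
    rw [h0] at this
    simp at this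
  set P : Polynomial ℂ := ∏ k : Fin K, (X - C (ϑ k)) with hPdef
  have hPmonic : P.Monic := monic_prod_of_monic _ _ fun k _ => monic_X_sub_C _
  have hPne : P ≠ 0 := hPmonic.ne_zero
  have hPdeg : P.natDegree = K := by
    rw [hPdef, natDegree_prod_of_monic _ _ (fun k _ => monic_X_sub_C _)]
    simp
  -- bannPolyOf K h = P
  have hPolyh : bannPolyOf K h = P := by
    ext n
    by_cases hn : n ≤ K
    · set t : Fin (K+1) := ⟨K - n, by omega⟩ with ht
      have hKt : K - (t : ℕ) = n := by simp [ht]; omega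
      rw [← hKt, bannPolyOf_coeff, hh t]
    · rw [coeff_eq_zero_of_natDegree_lt (lt_of_le_of_lt (bannPolyOf_natDegree_le h) (by omega)),
        coeff_eq_zero_of_natDegree_lt (by omega : P.natDegree < n)]
  -- P evaluates to zero at each ϑ k
  have hProot : ∀ k, P.eval (ϑ k) = 0 := by
    intro k
    rw [hPdef, eval_prod]
    exact Finset.prod_eq_zero (Finset.mem_univ k) (by simp)
  ext v
  rw [LinearMap.mem_ker, Submodule.mem_span_singleton]
  -- L k := ∑ s, v s * (ϑ k)⁻¹ ^ s
  set L : Fin K → ℂ := fun k => ∑ s : Fin (K+1), v s * (ϑ k)⁻¹ ^ (s : ℕ) with hL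
  -- entry formula
  have hentry : ∀ (i : Fin Q) (p : Fin (K+1)),
      (Matrix.mulVecLin (Matrix.of
        fun (p : Fin Q × Fin (K + 1)) (s : Fin (K + 1)) =>
          ∑ k : Fin K, c p.1 k * ϑ k ^ (((p.2 : ℕ) : ℤ) - ((s : ℕ) : ℤ))) v) (i, p)
        = ∑ k : Fin K, (c i k * L k) * ϑ k ^ (p : ℕ) := by
    intro i p
    rw [Matrix.mulVecLin_apply, Matrix.mulVec]
    simp only [Matrix.of_apply, dotProduct, Finset.sum_mul]
    rw [Finset.sum_comm]
    refine Finset.sum_congr rfl fun k _ => ?_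
    rw [hL]
    rw [Finset.mul_sum, Finset.sum_mul]
    refine Finset.sum_congr rfl fun s _ => ?_
    rw [zpow_sub₀ (hϑ0 k), zpow_natCast, zpow_natCast, div_eq_mul_inv, ← inv_pow]
    ring
  -- eval vs L
  have hevalL : ∀ k, (bannPolyOf K v).eval (ϑ k) = ϑ k ^ K * L k := by
    intro k
    rw [bannPolyOf_eval, hL, Finset.mul_sum]
    refine Finset.sum_congr rfl fun s _ => ?_
    rw [pow_sub₀ _ (hϑ0 k) s.is_le, ← inv_pow]
    ring
  constructor
  · intro hv
    -- mulVec = 0 → ∀ k, L k = 0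
    have hL0 : ∀ k, L k = 0 := by
      intro k
      obtain ⟨i, hi⟩ := hc k
      have hrow : (fun k => c i k * L k) = 0 := by
        apply Matrix.eq_zero_of_forall_pow_sum_mul_pow_eq_zero hinj
        intro j
        have hvp := congrFun hv (i, j.castSucc)
        rw [hentry i j.castSucc] at hvp
        simpa using hvp
      have := congrFun hrow k
      simp only [Pi.zero_apply] at this
      rcases mul_eq_zero.mp this with h' | h'
      · exact absurd h' hi
      · exact h'
    -- so polyOf v vanishes at each ϑ k, hence P ∣ polyOf v
    by_cases hv0 : bannPolyOf K v = 0
    · refine ⟨0, ?_⟩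
      have hz : bannPolyOf K (0 : Fin (K+1) → ℂ) = 0 := by simp [bannPolyOf]
      have : v = 0 := bannPolyOf_injective (hv0.trans hz.symm)
      simp [this]
    · have hroots : ∀ k, IsRoot (bannPolyOf K v) (ϑ k) := by
        intro k
        rw [IsRoot, hevalL k, hL0 k, mul_zero]
      have hle : (Finset.univ.val.map ϑ) ≤ (bannPolyOf K v).roots := by
        rw [Multiset.le_iff_count]
        intro a
        by_cases ha : a ∈ Finset.univ.val.map ϑ
        · have hnd : (Finset.univ.val.map ϑ).Nodup :=
            Finset.univ.nodup.map hinj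
          rw [Multiset.count_eq_one_of_mem hnd ha]
          obtain ⟨k, _, rfl⟩ := Multiset.mem_map.mp ha
          exact Multiset.count_pos.mpr ((mem_roots hv0).mpr (hroots k))
        · rw [Multiset.count_eq_zero_of_notMem ha]
          exact Nat.zero_le _
      have hdvd : P ∣ bannPolyOf K v := by
        have h1 := (Multiset.prod_X_sub_C_dvd_iff_le_roots hv0 (Finset.univ.val.map ϑ)).mpr hle
        have h2 : ((Finset.univ.val.map ϑ).map fun a => X - C a).prod = P := by
          rw [Multiset.map_map, ← Finset.prod_eq_multiset_prod]
          rfl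
        rwa [h2] at h1
      obtain ⟨q, hq⟩ := hdvd
      have hqne : q ≠ 0 := by
        intro h0; rw [h0, mul_zero] at hq; exact hv0 hq
      have hqdeg : q.natDegree = 0 := by
        have := bannPolyOf_natDegree_le v
        rw [hq, natDegree_mul hPne hqne, hPdeg] at this
        omega
      obtain ⟨a, rfl⟩ := natDegree_eq_zero.mp hqdeg
      refine ⟨a, ?_⟩
      apply bannPolyOf_injective
      rw [bannPolyOf_smul, hPolyh, hq, mul_comm]
  · rintro ⟨a, rfl⟩
    -- v = a • h is in the kernel
    have hL0 : ∀ k, L k = 0 := by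
      intro k
      have heval : (bannPolyOf K (a • h)).eval (ϑ k) = 0 := by
        rw [bannPolyOf_smul, hPolyh, eval_mul, hProot k, mul_zero]
      rw [hevalL k] at heval
      exact (mul_eq_zero.mp heval).resolve_left (pow_ne_zero _ (hϑ0 k))
    funext ⟨i, p⟩
    rw [hentry i p]
    simp [hL0]
end
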